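/- Let φ : ℂ → M₂(ℝ) be the ring homomorphism given by φ(a+ib) = [[a, −b], [b, a]], let φ_* : Mod-M₂(ℝ) ⥤ Mod-ℂ be the restriction of scalars functor on right module categories, and let φ^* be any functor left adjoint to φ_*. Then φ^* is not heavily separable. -/

import Mathlib

open CategoryTheory

/-- A functor `F : C ⥤ D` is *heavily `I`-separable* (heavy separability of the second kind)
if there is a natural transformation `P : Hom_D(F −, F −) ⟶ Hom_X(I −, I −)` of functors
`Cᵒᵖ × C ⥤ Set` such that `P (F.map f) = I.map f` and `P` is compatible with composition. -/
def HeavilyISeparable {C : Type*} [Category C] {D : Type*} [Category D]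
    {X : Type*} [Category X] (F : C ⥤ D) (I : C ⥤ X) : Prop :=
  ∃ P : ∀ a b : C, (F.obj a ⟶ F.obj b) → (I.obj a ⟶ I.obj b),
    (∀ (a' a b b' : C) (u : a' ⟶ a) (v : b ⟶ b') (h : F.obj a ⟶ F.obj b),
        P a' b' (F.map u ≫ h ≫ F.map v) = I.map u ≫ P a b h ≫ I.map v) ∧
    (∀ (a b : C) (f : a ⟶ b), P a b (F.map f) = I.map f) ∧
    (∀ (a b c : C) (f : F.obj a ⟶ F.obj b) (g : F.obj b ⟶ F.obj c),
        P a c (f ≫ g) = P a b f ≫ P b c g)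

/-- A functor `F : C ⥤ D` is *heavily separable* if it is heavily `𝟭 C`-separable. -/
def HeavilySeparable {C : Type*} [Category C] {D : Type*} [Category D] (F : C ⥤ D) : Prop :=
  HeavilyISeparable F (𝟭 C)

universe u

noncomputable section Aux

variable (φ : ℂ →+* Matrix (Fin 2) (Fin 2) ℝ)
  (φUpper : ModuleCat.{u} ℂᵐᵒᵖ ⥤ ModuleCat.{u} (Matrix (Fin 2) (Fin 2) ℝ)ᵐᵒᵖ)
  (adj : φUpper ⊣ ModuleCat.restrictScalars (RingHom.op φ))

local notation "S" => Matrix (Fin 2) (Fin 2) ℝ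

/-- The rank-one free module over `ℂᵐᵒᵖ`. -/
abbrev aMod : ModuleCat.{u} ℂᵐᵒᵖ := ModuleCat.of ℂᵐᵒᵖ (ULift.{u} ℂᵐᵒᵖ)

/-- Generator of `φUpper.obj aMod`: the image of `1` under the unit of the adjunction. -/
def x0 : (ModuleCat.restrictScalars (RingHom.op φ)).obj (φUpper.obj aMod) :=
  adj.unit.app aMod ⟨1⟩

/-- `λ_m : z ↦ x0 • (m * φ z)` (written in mul-opposite form); a `ℂᵐᵒᵖ`-linear map. -/
def lam (m : Sᵐᵒᵖ) :
    aMod ⟶ (ModuleCat.restrictScalars (RingHom.op φ)).obj (φUpper.obj aMod) := ModuleCat.ofHom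
    (Y := (ModuleCat.restrictScalars (RingHom.op φ)).obj (φUpper.obj aMod))
  { toFun x := ((RingHom.op φ) x.down * m) • (x0 φ φUpper adj : φUpper.obj aMod)
    map_add' x y := by
      show ((RingHom.op φ) (x.down + y.down) * m) • _ = _
      rw [map_add, add_mul, add_smul]
    map_smul' c x := by
      show ((RingHom.op φ) (c * x.down) * m) • _ = _
      rw [map_mul, mul_assoc, mul_smul]
      rfl }

/-- The `Sᵐᵒᵖ`-linear endomorphism of `φUpper.obj aMod` corresponding to `m : Sᵐᵒᵖ`. -/
def Theta (m : Sᵐᵒᵖ) : φUpper.obj aMod ⟶ φUpper.obj aMod :=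
  (adj.homEquiv aMod (φUpper.obj aMod)).symm (lam φ φUpper adj m)

lemma homEquiv_Theta (m : Sᵐᵒᵖ) :
    adj.homEquiv aMod (φUpper.obj aMod) (Theta φ φUpper adj m) = lam φ φUpper adj m :=
  (adj.homEquiv _ _).apply_symm_apply _

lemma down_smul_one (c : ℂᵐᵒᵖ) : c • (⟨1⟩ : ULift.{u} ℂᵐᵒᵖ) = ⟨c⟩ := by
  have : (c • (⟨1⟩ : ULift.{u} ℂᵐᵒᵖ)).down = c * 1 := rfl
  cases h : c • (⟨1⟩ : ULift.{u} ℂᵐᵒᵖ)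
  simp only [h] at this
  simp [this]

lemma x0_smul (c : ℂᵐᵒᵖ) :
    ((RingHom.op φ) c) • (x0 φ φUpper adj : φUpper.obj aMod) = adj.unit.app aMod ⟨c⟩ := by
  have h1 : ((RingHom.op φ) c) • (x0 φ φUpper adj : φUpper.obj aMod)
      = (c • (x0 φ φUpper adj) :
        (ModuleCat.restrictScalars (RingHom.op φ)).obj (φUpper.obj aMod)) := rfl
  rw [h1, x0]
  exact ((map_smul (adj.unit.app aMod).hom c ⟨1⟩).symm.trans
    (congrArg _ (down_smul_one c)))

lemma lam_one : lam φ φUpper adj 1 = adj.unit.app aMod := by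
  apply ModuleCat.hom_ext
  apply LinearMap.ext; intro x
  show ((RingHom.op φ) x.down * 1) • (x0 φ φUpper adj : φUpper.obj aMod) = _
  rw [mul_one, x0_smul]

lemma Theta_one : Theta φ φUpper adj 1 = 𝟙 _ := by
  apply (adj.homEquiv _ _).injective
  rw [homEquiv_Theta, lam_one, Adjunction.homEquiv_unit]
  simp

lemma Theta_apply_x0 (m : Sᵐᵒᵖ) :
    Theta φ φUpper adj m (x0 φ φUpper adj) = m • (x0 φ φUpper adj : φUpper.obj aMod) := by
  have h := congrArg (fun (f : aMod ⟶ _) => f ⟨1⟩) (homEquiv_Theta φ φUpper adj m)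
  rw [Adjunction.homEquiv_unit] at h
  simp only at h
  have h2 : ((ModuleCat.restrictScalars (RingHom.op φ)).map (Theta φ φUpper adj m))
      ((adj.unit.app aMod) ⟨1⟩) = lam φ φUpper adj m ⟨1⟩ := h
  rw [ModuleCat.restrictScalars.map_apply] at h2
  have hx : (x0 φ φUpper adj) = adj.unit.app aMod ⟨1⟩ := rfl
  rw [hx, h2]
  show ((RingHom.op φ) (1 : ℂᵐᵒᵖ) * m) • (x0 φ φUpper adj : φUpper.obj aMod)
      = m • (x0 φ φUpper adj : φUpper.obj aMod)
  rw [map_one, one_mul]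

lemma Theta_mul (m n : Sᵐᵒᵖ) :
    Theta φ φUpper adj m ≫ Theta φ φUpper adj n = Theta φ φUpper adj (m * n) := by
  apply (adj.homEquiv _ _).injective
  rw [Adjunction.homEquiv_naturality_right, homEquiv_Theta, homEquiv_Theta]
  apply ModuleCat.hom_ext
  apply LinearMap.ext; intro x
  show ((ModuleCat.restrictScalars (RingHom.op φ)).map (Theta φ φUpper adj n))
      (lam φ φUpper adj m x) = lam φ φUpper adj (m * n) x
  rw [ModuleCat.restrictScalars.map_apply]
  show Theta φ φUpper adj n ((((RingHom.op φ) x.down * m)) •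
      (show φUpper.obj aMod from x0 φ φUpper adj)) = _
  rw [map_smul, Theta_apply_x0]
  show _ = ((RingHom.op φ) x.down * (m * n)) • (x0 φ φUpper adj : φUpper.obj aMod)
  simp [mul_smul, mul_assoc]
  exact mul_smul _ _ _

/-- Scalar multiplication by `c` as an endomorphism of `aMod`. -/
def muMap (c : ℂᵐᵒᵖ) : aMod ⟶ aMod := ModuleCat.ofHom
  { toFun x := c • x
    map_add' x y := smul_add c x y
    map_smul' d x := by
      apply ULift.ext
      show c * (d * x.down) = d * (c * x.down)
      ring }

lemma Theta_phi (c : ℂᵐᵒᵖ) :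
    Theta φ φUpper adj ((RingHom.op φ) c) = φUpper.map (muMap c) := by
  apply (adj.homEquiv _ _).injective
  rw [homEquiv_Theta]
  have h := adj.homEquiv_naturality_left (muMap c) (𝟙 (φUpper.obj aMod))
  rw [Category.comp_id] at h
  rw [h, Adjunction.homEquiv_id]
  apply ModuleCat.hom_ext
  apply LinearMap.ext; intro x
  show ((RingHom.op φ) x.down * (RingHom.op φ) c) • (x0 φ φUpper adj : φUpper.obj aMod)
      = adj.unit.app aMod (muMap c x)
  rw [← map_mul, x0_smul]
  congr 1
  apply ULift.ext
  show x.down * c = c * x.down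
  ring

end Aux
/-- For `φ : ℂ → M₂(ℝ)`, `φ(a+ib) = [[a,-b],[b,a]]`, the extension of scalars `φ^*`
is not heavily separable. -/
theorem complex_to_matrix_not_heavilySeparable
    (φ : ℂ →+* Matrix (Fin 2) (Fin 2) ℝ)
    (hφ : ∀ z : ℂ, φ z = !![z.re, -z.im; z.im, z.re])
    (φUpper : ModuleCat.{u} ℂᵐᵒᵖ ⥤ ModuleCat.{u} (Matrix (Fin 2) (Fin 2) ℝ)ᵐᵒᵖ)
    (adj : φUpper ⊣ ModuleCat.restrictScalars (RingHom.op φ)) :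
    ¬ HeavilySeparable φUpper := by
  rintro ⟨P, hnat, hPF, hcomp⟩
  classical
  -- evaluation at 1 of endomorphisms of `aMod`
  let ev : ((𝟭 (ModuleCat.{u} ℂᵐᵒᵖ)).obj (aMod) ⟶ (𝟭 _).obj (aMod)) → ℂᵐᵒᵖ :=
    fun f => (f ⟨1⟩).down
  have hev_comp : ∀ f g : ((𝟭 (ModuleCat.{u} ℂᵐᵒᵖ)).obj (aMod) ⟶ (𝟭 _).obj (aMod)),
      ev (f ≫ g) = ev f * ev g := by
    intro f g
    show (g (f ⟨1⟩)).down = (f ⟨1⟩).down * (g ⟨1⟩).down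
    have h2 : g (f ⟨1⟩) = (f ⟨1⟩).down • g ⟨1⟩ := by
      conv_lhs => rw [show (f ⟨1⟩ : ULift.{u} ℂᵐᵒᵖ) = (f ⟨1⟩).down • ⟨1⟩ from
        (down_smul_one _).symm]
      exact map_smul g.hom _ _
    rw [h2]
    rfl
  let E : (Matrix (Fin 2) (Fin 2) ℝ)ᵐᵒᵖ → ℂᵐᵒᵖ :=
    fun m => ev (P (aMod) (aMod) (Theta φ φUpper adj m))
  have hE1 : ∀ c : ℂᵐᵒᵖ, E ((RingHom.op φ) c) = c := by
    intro c
    show ev (P _ _ (Theta φ φUpper adj ((RingHom.op φ) c))) = c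
    rw [Theta_phi, hPF]
    show ((muMap.{u} c) (⟨1⟩ : ULift.{u} ℂᵐᵒᵖ)).down = c
    show c * 1 = c
    rw [mul_one]
  have hEmul : ∀ m n, E (m * n) = E m * E n := by
    intro m n
    show ev (P _ _ (Theta φ φUpper adj (m * n))) = _
    rw [← Theta_mul, hcomp, hev_comp]
  have hEr : ∀ m (c : ℂᵐᵒᵖ), E (m * (RingHom.op φ) c) = E m * c := by
    intro m c
    have h := hnat (aMod) (aMod) (aMod) (aMod) (𝟙 _) (muMap c) (Theta φ φUpper adj m)
    rw [CategoryTheory.Functor.map_id, Category.id_comp,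
      ← Theta_phi φ φUpper adj c, Theta_mul] at h
    show ev (P (aMod) (aMod) (Theta φ φUpper adj (m * (RingHom.op φ) c))) = _
    rw [h, hev_comp, hev_comp]
    have hid : ev ((𝟭 (ModuleCat.{u} ℂᵐᵒᵖ)).map (𝟙 (aMod))) = 1 := rfl
    have hmu : ev ((𝟭 (ModuleCat.{u} ℂᵐᵒᵖ)).map (muMap c)) = c := by
      show c * 1 = c
      rw [mul_one]
    rw [hid, hmu, one_mul]
  -- the two matrices
  set g : Matrix (Fin 2) (Fin 2) ℝ := !![1, 0; 0, -1] with hgdef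
  set σ : Matrix (Fin 2) (Fin 2) ℝ := !![0, 1; 1, 0] with hσdef
  have hone : (1 : Matrix (Fin 2) (Fin 2) ℝ) = !![1, 0; 0, 1] := Matrix.one_fin_two
  have hg2 : g * g = 1 := by
    rw [hgdef, hone]
    norm_num [Matrix.mul_fin_two]
  have hσ2 : σ * σ = 1 := by
    rw [hσdef, hone]
    norm_num [Matrix.mul_fin_two]
  have hφI : φ Complex.I = !![0, -1; 1, 0] := by
    rw [hφ]
    norm_num
  have hσφ : σ = φ Complex.I * g := by
    rw [hφI, hgdef, hσdef]
    norm_num [Matrix.mul_fin_two]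
  -- opposites
  have hE_one : E 1 = 1 := by
    have := hE1 1
    rwa [map_one] at this
  have e2 : E (MulOpposite.op g) * E (MulOpposite.op g) = 1 := by
    rw [← hEmul, ← MulOpposite.op_mul, hg2, MulOpposite.op_one, hE_one]
  have e1 : E (MulOpposite.op σ) * E (MulOpposite.op σ) = 1 := by
    rw [← hEmul, ← MulOpposite.op_mul, hσ2, MulOpposite.op_one, hE_one]
  have e3 : E (MulOpposite.op σ) = E (MulOpposite.op g) * MulOpposite.op Complex.I := by
    have hfact : MulOpposite.op σ
        = MulOpposite.op g * (RingHom.op φ) (MulOpposite.op Complex.I) := by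
      rw [hσφ, MulOpposite.op_mul]
      rfl
    rw [hfact, hEr]
  have e4 : MulOpposite.op Complex.I * MulOpposite.op Complex.I = (-1 : ℂᵐᵒᵖ) := by
    rw [← MulOpposite.op_mul, Complex.I_mul_I, MulOpposite.op_neg, MulOpposite.op_one]
  have : (1 : ℂᵐᵒᵖ) = -1 := by
    calc (1 : ℂᵐᵒᵖ) = E (MulOpposite.op σ) * E (MulOpposite.op σ) := e1.symm
    _ = (E (MulOpposite.op g) * E (MulOpposite.op g)) *
        (MulOpposite.op Complex.I * MulOpposite.op Complex.I) := by rw [e3]; ring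
    _ = -1 := by rw [e2, e4, one_mul]
  have h2 := congrArg MulOpposite.unop this
  simp only [MulOpposite.unop_one, MulOpposite.unop_neg] at h2
  norm_num at h2
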